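/- arXiv:2303.14658 — 3 statements merged into one kernel-verified Lean document; each statement's English description precedes it below -/
import Mathlib

section
/- Suppose the excess loss r is σ-sub-Gaussian under P_W ⊗ μ (i.e. log ∫ exp(λ·(r − R)) d(P_W ⊗ μ) ≤ λ²σ²/2 for all λ ∈ ℝ) and that R = ∫ r d(P_W ⊗ μ) > 0. Fix any η with 0 < η < 2R/σ² and set a_η := 1 − ησ²/(2R) (so 0 < a_η < 1). Then gen ≤ ((1 − a_η)/a_η)·R̂ + (1/(n·η·a_η)) ∑_{i=1}^n I(W;Z_i), and moreover R ≤ (1/a_η)·R̂ + (1/(n·η·a_η)) ∑_{i=1}^n I(W;Z_i). -/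
open MeasureTheory Real

/-- Real-valued Kullback–Leibler divergence `D(P‖Q)`,
the integral of the log-likelihood ratio with respect to `P`. -/
noncomputable def klReal {α : Type*} [MeasurableSpace α] (P Q : Measure α) : ℝ :=
  ∫ x, llr P Q x ∂P

variable {W Z : Type*} [MeasurableSpace W] [MeasurableSpace Z]

/-- Population risk `L(w) = ∫ ℓ(w,z) dμ(z)`. -/
noncomputable def popRisk (μ : Measure Z) (ℓ : W × Z → ℝ) (w : W) : ℝ :=
  ∫ z, ℓ (w, z) ∂μ

/-- Empirical risk `L̂(w,s) = (1/n) ∑ i, ℓ(w, s i)`. -/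
noncomputable def empRisk (n : ℕ) (ℓ : W × Z → ℝ) (w : W) (s : Fin n → Z) : ℝ :=
  (1 / (n : ℝ)) * ∑ i, ℓ (w, s i)

/-- Expected generalization error `gen = E_P[L(W) − L̂(W,S_n)]`. -/
noncomputable def genErr (μ : Measure Z) (n : ℕ) (P : Measure (W × (Fin n → Z)))
    (ℓ : W × Z → ℝ) : ℝ :=
  ∫ p, (popRisk μ ℓ p.1 - empRisk n ℓ p.1 p.2) ∂P

/-- Expected empirical excess risk `R̂ = E_P[L̂(W,S_n) − L̂(w*,S_n)]`. -/
noncomputable def empExcess (n : ℕ) (P : Measure (W × (Fin n → Z)))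
    (ℓ : W × Z → ℝ) (wstar : W) : ℝ :=
  ∫ p, (empRisk n ℓ p.1 p.2 - empRisk n ℓ wstar p.2) ∂P

/-- Expected excess risk `R = ∫ r d(P_W ⊗ μ)` where `r(w,z) = ℓ(w,z) − ℓ(w*,z)`. -/
noncomputable def excessRisk (μ : Measure Z) {n : ℕ} (P : Measure (W × (Fin n → Z)))
    (ℓ : W × Z → ℝ) (wstar : W) : ℝ :=
  ∫ p, (ℓ p - ℓ (wstar, p.2)) ∂((P.map Prod.fst).prod μ)

/-- Joint law `P_i` of `(W, Z_i)`: the pushforward of `P` under `(w,z) ↦ (w, z_i)`. -/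
noncomputable def jointLaw {n : ℕ} (P : Measure (W × (Fin n → Z))) (i : Fin n) :
    Measure (W × Z) :=
  P.map fun p => (p.1, p.2 i)

/-- Mutual information `I(W;Z_i) = D(P_i ‖ P_W ⊗ μ)`. -/
noncomputable def mutInfo (μ : Measure Z) {n : ℕ} (P : Measure (W × (Fin n → Z)))
    (i : Fin n) : ℝ :=
  klReal (jointLaw P i) ((P.map Prod.fst).prod μ)

section Aux

variable {α : Type*} [MeasurableSpace α] {μ ν : Measure α}

lemma klReal_nonneg_aux [IsProbabilityMeasure μ] [IsProbabilityMeasure ν]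
    (h : μ ≪ ν) (hi : Integrable (llr μ ν) μ) : 0 ≤ ∫ x, llr μ ν x ∂μ := by
  have hexp : (fun x ↦ exp (- llr μ ν x)) =ᵐ[μ] fun x ↦ (ν.rnDeriv μ x).toReal :=
    exp_neg_llr h
  have hint_exp : Integrable (fun x ↦ exp (- llr μ ν x)) μ :=
    (Measure.integrable_toReal_rnDeriv).congr hexp.symm
  have hjensen : exp (∫ x, - llr μ ν x ∂μ) ≤ ∫ x, exp (- llr μ ν x) ∂μ := by
    refine ConvexOn.map_integral_le (convexOn_exp) (continuousOn_exp)
      isClosed_univ ?_ hi.neg hint_exp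
    · exact Filter.Eventually.of_forall fun x => Set.mem_univ _
  have hle1 : ∫ x, exp (- llr μ ν x) ∂μ ≤ 1 := by
    rw [integral_congr_ae hexp]
    calc ∫ x, (ν.rnDeriv μ x).toReal ∂μ
        = (ν Set.univ).toReal - (ν.singularPart μ Set.univ).toReal :=
          Measure.integral_toReal_rnDeriv' ..
      _ ≤ 1 := by
          have h1 : (ν Set.univ).toReal = 1 := by simp
          have h2 : 0 ≤ (ν.singularPart μ Set.univ).toReal := ENNReal.toReal_nonneg
          linarith
  have h2 : exp (- ∫ x, llr μ ν x ∂μ) ≤ 1 := by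
    rw [← integral_neg]
    exact hjensen.trans hle1
  nlinarith [Real.add_one_le_exp (- ∫ x, llr μ ν x ∂μ)]

lemma donsker_varadhan_aux [IsProbabilityMeasure μ] [IsProbabilityMeasure ν]
    (h : μ ≪ ν) (f : α → ℝ) (hfμ : Integrable f μ)
    (hfν : Integrable (fun x ↦ exp (f x)) ν) (hllr : Integrable (llr μ ν) μ) :
    ∫ x, f x ∂μ ≤ ∫ x, llr μ ν x ∂μ + log (∫ x, exp (f x) ∂ν) := by
  have hνt : IsProbabilityMeasure (ν.tilted f) := isProbabilityMeasure_tilted hfν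
  have hacμ : μ ≪ ν.tilted f := h.trans (absolutelyContinuous_tilted hfν)
  have hint : Integrable (llr μ (ν.tilted f)) μ :=
    integrable_llr_tilted_right h hfμ hllr hfν
  have h0 : 0 ≤ ∫ x, llr μ (ν.tilted f) x ∂μ := klReal_nonneg_aux hacμ hint
  rw [integral_llr_tilted_right h hfμ hfν hllr] at h0
  linarith

lemma pi_map_eval_aux {Z : Type*} [MeasurableSpace Z] (μ : Measure Z) [IsProbabilityMeasure μ]
    (n : ℕ) (i : Fin n) :
    (Measure.pi fun _ : Fin n => μ).map (Function.eval i) = μ := by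
  ext s hs
  rw [Measure.map_apply (measurable_pi_apply i) hs, Set.eval_preimage, Measure.pi_pi]
  rw [show (fun i_1 => μ (Function.update (fun _ => Set.univ) i s i_1))
      = Function.update (fun _ => μ Set.univ) i (μ s) by
    ext j
    by_cases hji : j = i
    · subst hji; simp
    · simp [Function.update_of_ne hji]]
  rw [Finset.prod_update_of_mem (Finset.mem_univ i)]
  simp

end Aux

theorem fast_rate_subGaussian
    (μ : Measure Z) [IsProbabilityMeasure μ] (n : ℕ) (hn : 0 < n)
    (P : Measure (W × (Fin n → Z))) [IsProbabilityMeasure P]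
    (hmarg : P.map Prod.snd = Measure.pi fun _ : Fin n => μ)
    (ℓ : W × Z → ℝ) (hℓ : Measurable ℓ) (wstar : W)
    (hint : Integrable ℓ ((P.map Prod.fst).prod μ))
    (hinti : ∀ i : Fin n, Integrable ℓ (jointLaw P i))
    (hintw : Integrable (fun z => ℓ (wstar, z)) μ)
    (hac : ∀ i : Fin n, jointLaw P i ≪ (P.map Prod.fst).prod μ)
    (hIfin : ∀ i : Fin n, Integrable (llr (jointLaw P i) ((P.map Prod.fst).prod μ))
      (jointLaw P i))
    (σ : ℝ)
    (hsubInt : ∀ lam : ℝ,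
      Integrable
        (fun p => Real.exp (lam * ((ℓ p - ℓ (wstar, p.2)) - excessRisk μ P ℓ wstar)))
        ((P.map Prod.fst).prod μ))
    (hsub : ∀ lam : ℝ,
      Real.log (∫ p, Real.exp (lam * ((ℓ p - ℓ (wstar, p.2)) - excessRisk μ P ℓ wstar))
          ∂((P.map Prod.fst).prod μ)) ≤ lam ^ 2 * σ ^ 2 / 2)
    (hR : 0 < excessRisk μ P ℓ wstar)
    (η : ℝ) (hη : 0 < η) (hη2 : η < 2 * excessRisk μ P ℓ wstar / σ ^ 2)
    (aη : ℝ) (haη : aη = 1 - η * σ ^ 2 / (2 * excessRisk μ P ℓ wstar)) :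
    genErr μ n P ℓ ≤
      ((1 - aη) / aη) * empExcess n P ℓ wstar +
        (1 / ((n : ℝ) * η * aη)) * ∑ i : Fin n, mutInfo μ P i ∧
    excessRisk μ P ℓ wstar ≤
      (1 / aη) * empExcess n P ℓ wstar +
        (1 / ((n : ℝ) * η * aη)) * ∑ i : Fin n, mutInfo μ P i := by
  have hPWm : AEMeasurable (Prod.fst : W × (Fin n → Z) → W) P := measurable_fst.aemeasurable
  haveI hPW : IsProbabilityMeasure (P.map Prod.fst) := Measure.isProbabilityMeasure_map hPWm
  set ν := (P.map Prod.fst).prod μ with hν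
  haveI : IsProbabilityMeasure ν := by rw [hν]; infer_instance
  set R := excessRisk μ P ℓ wstar with hRdef
  set Ehat := empExcess n P ℓ wstar with hEhat
  have hg : Measurable (fun z => ℓ (wstar, z)) := hℓ.comp measurable_prodMk_left
  have hr : Measurable (fun q : W × Z => ℓ q - ℓ (wstar, q.2)) :=
    hℓ.sub (hg.comp measurable_snd)
  have hmi : ∀ i : Fin n, Measurable (fun p : W × (Fin n → Z) => (p.1, p.2 i)) :=
    fun i => measurable_fst.prodMk ((measurable_pi_apply i).comp measurable_snd)
  haveI hPi : ∀ i, IsProbabilityMeasure (jointLaw P i) := fun i =>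
    Measure.isProbabilityMeasure_map (hmi i).aemeasurable
  have hei : ∀ i : Fin n, Measurable (fun p : W × (Fin n → Z) => p.2 i) :=
    fun i => (measurable_pi_apply i).comp measurable_snd
  -- second marginal of P at coordinate i is μ
  have hPi2 : ∀ i : Fin n, P.map (fun p => p.2 i) = μ := by
    intro i
    have h1 : (fun p : W × (Fin n → Z) => p.2 i) = Function.eval i ∘ Prod.snd := rfl
    rw [h1, ← Measure.map_map (measurable_pi_apply i) measurable_snd, hmarg,
      pi_map_eval_aux]
  -- integrabilities under P
  have hint1 : ∀ i : Fin n, Integrable (fun p : W × (Fin n → Z) => ℓ (p.1, p.2 i)) P :=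
    fun i => (integrable_map_measure hℓ.aestronglyMeasurable (hmi i).aemeasurable).mp (hinti i)
  have hint2 : ∀ i : Fin n, Integrable (fun p : W × (Fin n → Z) => ℓ (wstar, p.2 i)) P := by
    intro i
    have h2 : Integrable (fun z => ℓ (wstar, z)) (P.map (fun p => p.2 i)) := by
      rw [hPi2 i]; exact hintw
    exact (integrable_map_measure hg.aestronglyMeasurable (hei i).aemeasurable).mp h2
  have hri : ∀ i : Fin n,
      Integrable (fun p : W × (Fin n → Z) => ℓ (p.1, p.2 i) - ℓ (wstar, p.2 i)) P :=
    fun i => (hint1 i).sub (hint2 i)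
  -- expected excess loss at coordinate i
  have hEi : ∀ i : Fin n, ∫ q, (ℓ q - ℓ (wstar, q.2)) ∂(jointLaw P i)
      = ∫ p, (ℓ (p.1, p.2 i) - ℓ (wstar, p.2 i)) ∂P := by
    intro i
    rw [jointLaw]
    exact integral_map (hmi i).aemeasurable hr.aestronglyMeasurable
  -- empExcess identity
  have hEmp : Ehat
      = (1/(n:ℝ)) * ∑ i, ∫ p, (ℓ (p.1, p.2 i) - ℓ (wstar, p.2 i)) ∂P := by
    rw [hEhat, empExcess]
    have h1 : ∀ p : W × (Fin n → Z), empRisk n ℓ p.1 p.2 - empRisk n ℓ wstar p.2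
        = (1/(n:ℝ)) * ∑ i, (ℓ (p.1, p.2 i) - ℓ (wstar, p.2 i)) := by
      intro p; rw [empRisk, empRisk, ← mul_sub, Finset.sum_sub_distrib]
    simp_rw [h1]
    rw [integral_const_mul _, integral_finset_sum _ (fun i _ => hri i)]
  -- per-coordinate Donsker–Varadhan bound
  have hkey : ∀ i : Fin n,
      η * (R - ∫ p, (ℓ (p.1, p.2 i) - ℓ (wstar, p.2 i)) ∂P)
        ≤ mutInfo μ P i + η^2 * σ^2 / 2 := by
    intro i
    set f : W × Z → ℝ := fun q => (-η) * ((ℓ q - ℓ (wstar, q.2)) - R) with hf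
    have h1 : Integrable (fun q : W × Z => ℓ q - ℓ (wstar, q.2)) (jointLaw P i) := by
      rw [jointLaw]
      exact (integrable_map_measure hr.aestronglyMeasurable (hmi i).aemeasurable).mpr (hri i)
    have hfμ : Integrable f (jointLaw P i) := ((h1.sub (integrable_const R)).const_mul _)
    have hfν : Integrable (fun q => Real.exp (f q)) ν := hsubInt (-η)
    have hdv := donsker_varadhan_aux (hac i) f hfμ hfν (hIfin i)
    have hfint : ∫ q, f q ∂(jointLaw P i)
        = -η * ((∫ q, (ℓ q - ℓ (wstar, q.2)) ∂(jointLaw P i)) - R) := by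
      rw [hf, integral_const_mul _, integral_sub h1 (integrable_const R), integral_const]
      simp
    have hlog : Real.log (∫ q, Real.exp (f q) ∂ν) ≤ η^2 * σ^2 / 2 := by
      have := hsub (-η)
      have hsq : (-η)^2 = η^2 := by ring
      rw [hsq] at this
      exact this
    have hmut : mutInfo μ P i = ∫ x, llr (jointLaw P i) ν x ∂(jointLaw P i) := rfl
    rw [hfint, hEi i] at hdv
    rw [hmut]
    linarith
  -- sum the per-coordinate bounds
  set S := ∑ i : Fin n, mutInfo μ P i with hS
  have hsum : η * ((n:ℝ) * R - (n:ℝ) * Ehat) ≤ S + (n:ℝ) * (η^2*σ^2/2) := by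
    have h2 := Finset.sum_le_sum (fun i (_ : i ∈ Finset.univ) => hkey i)
    have hL : ∑ i : Fin n, η * (R - ∫ p, (ℓ (p.1, p.2 i) - ℓ (wstar, p.2 i)) ∂P)
        = η * ((n:ℝ)*R - (n:ℝ) * Ehat) := by
      rw [← Finset.mul_sum, Finset.sum_sub_distrib, Finset.sum_const, Finset.card_univ,
        Fintype.card_fin, nsmul_eq_mul, hEmp]
      have hn0 : (n:ℝ) ≠ 0 := Nat.cast_ne_zero.mpr hn.ne'
      field_simp
    have hRt : ∑ i : Fin n, (mutInfo μ P i + η^2 * σ^2 / 2)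
        = S + (n:ℝ) * (η^2*σ^2/2) := by
      rw [Finset.sum_add_distrib, Finset.sum_const, Finset.card_univ, Fintype.card_fin,
        nsmul_eq_mul, hS]
    rw [hL, hRt] at h2
    exact h2
  -- positivity facts
  have hσ2 : 0 < σ^2 := by
    rcases lt_or_eq_of_le (sq_nonneg σ) with h | h
    · exact h
    · exfalso; rw [← h, div_zero] at hη2; linarith
  have haηpos : 0 < aη := by
    rw [haη]
    have h1 : η * σ^2 < 2 * R := (lt_div_iff₀ hσ2).mp hη2
    have h2 : η * σ^2 / (2*R) < 1 := by
      rw [div_lt_one (by linarith)]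
      linarith
    linarith
  have hn0 : (0:ℝ) < (n:ℝ) := Nat.cast_pos.mpr hn
  -- core inequality : aη * R ≤ Ehat + S / (n * η)
  have hcore : aη * R ≤ Ehat + S / ((n:ℝ) * η) := by
    have h1 : η * σ^2 / 2 = (1 - aη) * R := by
      rw [haη]
      field_simp
      ring
    have h2 : R - Ehat ≤ S / ((n:ℝ)*η) + η*σ^2/2 := by
      have h3 : η * (n:ℝ) * (R - Ehat) ≤ S + (n:ℝ) * (η^2*σ^2/2) := by
        calc η * (n:ℝ) * (R - Ehat) = η * ((n:ℝ) * R - (n:ℝ) * Ehat) := by ring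
          _ ≤ _ := hsum
      rw [div_add' _ _ _ (by positivity)]
      rw [le_div_iff₀ (by positivity)]
      nlinarith
    nlinarith
  -- second conjunct
  have hsecond : R ≤ (1/aη) * Ehat + (1 / ((n:ℝ) * η * aη)) * S := by
    have h1 : R = (aη * R) / aη := by field_simp
    rw [h1]
    calc (aη * R)/aη ≤ (Ehat + S/((n:ℝ)*η))/aη :=
          div_le_div_of_nonneg_right hcore haηpos.le
      _ = (1/aη) * Ehat + (1 / ((n:ℝ) * η * aη)) * S := by
          field_simp
  -- generalization error identity : genErr = R - Ehat
  have hνsnd : ν.map Prod.snd = μ := by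
    rw [hν, Measure.map_snd_prod]; simp
  have hgν : Integrable (fun q : W × Z => ℓ (wstar, q.2)) ν := by
    have h2 : Integrable (fun z => ℓ (wstar, z)) (ν.map Prod.snd) := by
      rw [hνsnd]; exact hintw
    exact (integrable_map_measure hg.aestronglyMeasurable measurable_snd.aemeasurable).mp h2
  have hpopm : StronglyMeasurable (popRisk μ ℓ) :=
    hℓ.stronglyMeasurable.integral_prod_right'
  have hA : ∫ p, popRisk μ ℓ p.1 ∂P = ∫ q, ℓ q ∂ν := by
    rw [hν, integral_prod ℓ hint]
    exact (integral_map measurable_fst.aemeasurable hpopm.aestronglyMeasurable).symm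
  have hAint : Integrable (fun p : W × (Fin n → Z) => popRisk μ ℓ p.1) P := by
    refine (integrable_map_measure hpopm.aestronglyMeasurable measurable_fst.aemeasurable).mp ?_
    exact hint.integral_prod_left
  have hLstar : ∫ q, ℓ (wstar, q.2) ∂ν = ∫ z, ℓ (wstar, z) ∂μ := by
    rw [← hνsnd]
    exact (integral_map measurable_snd.aemeasurable
      (by rw [hνsnd]; exact hg.aestronglyMeasurable)).symm
  have hRsplit : R = ∫ p, popRisk μ ℓ p.1 ∂P - ∫ z, ℓ (wstar,z) ∂μ := by
    rw [hRdef, excessRisk, ← hν, integral_sub hint hgν, hA, hLstar]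
  have hBint : Integrable (fun p : W × (Fin n → Z) => empRisk n ℓ p.1 p.2) P := by
    have : Integrable (fun p : W × (Fin n → Z) =>
        (1/(n:ℝ)) * ∑ i, ℓ (p.1, p.2 i)) P :=
      (integrable_finset_sum _ (fun i _ => hint1 i)).const_mul _
    exact this
  have hBwint : Integrable (fun p : W × (Fin n → Z) => empRisk n ℓ wstar p.2) P := by
    have : Integrable (fun p : W × (Fin n → Z) =>
        (1/(n:ℝ)) * ∑ i, ℓ (wstar, p.2 i)) P :=
      (integrable_finset_sum _ (fun i _ => hint2 i)).const_mul _
    exact this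
  have hBw : ∫ p, empRisk n ℓ wstar p.2 ∂P = ∫ z, ℓ (wstar, z) ∂μ := by
    simp_rw [empRisk]
    rw [integral_const_mul _, integral_finset_sum _ (fun i _ => hint2 i)]
    have h4 : ∀ i : Fin n, ∫ p, ℓ (wstar, p.2 i) ∂P = ∫ z, ℓ (wstar,z) ∂μ := by
      intro i
      rw [← hPi2 i]
      exact (integral_map (hei i).aemeasurable
        (by rw [hPi2 i]; exact hg.aestronglyMeasurable)).symm
    simp_rw [h4]
    rw [Finset.sum_const, Finset.card_univ, Fintype.card_fin, nsmul_eq_mul]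
    have hn0' : (n:ℝ) ≠ 0 := Nat.cast_ne_zero.mpr hn.ne'
    field_simp
  have hE2 : Ehat = ∫ p, empRisk n ℓ p.1 p.2 ∂P - ∫ z, ℓ (wstar,z) ∂μ := by
    rw [hEhat, empExcess, integral_sub hBint hBwint, hBw]
  have hgen : genErr μ n P ℓ = R - Ehat := by
    rw [genErr, integral_sub hAint hBint, hE2, hRsplit]
    ring
  constructor
  · rw [hgen]
    have h5 : ((1-aη)/aη) * Ehat = (1/aη) * Ehat - Ehat := by
      field_simp
    rw [h5]
    linarith
  · exact hsecond
end

section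
/- Suppose the excess loss r is (ν², α)-sub-exponential under P_W ⊗ μ for some ν, α > 0, i.e. log ∫ exp(λ·(r − R)) d(P_W ⊗ μ) ≤ λ²ν²/2 for every λ with |λ| < 1/α, and suppose R = ∫ r d(P_W ⊗ μ) > 0. Then for every η with 0 < η < 1/α and η ≤ R/ν², the (η, 1/2)-central condition holds, i.e. log ∫ exp(−η·r) d(P_W ⊗ μ) ≤ −(η/2)·R, and consequently gen ≤ R̂ + (2/(η·n)) ∑_{i=1}^n I(W;Z_i). -/
open MeasureTheory Real

variable {W Z : Type*} [MeasurableSpace W] [MeasurableSpace Z]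

lemma klReal_nonneg {Ω : Type*} [MeasurableSpace Ω] (P Q : Measure Ω)
    [IsProbabilityMeasure P] [IsProbabilityMeasure Q]
    (hPQ : P ≪ Q) (hllr : Integrable (llr P Q) P) : 0 ≤ klReal P Q := by
  have hint : Integrable (fun x => exp (-llr P Q x)) P :=
    (integrable_congr (exp_neg_llr hPQ)).mpr Measure.integrable_toReal_rnDeriv
  have hJ := convexOn_exp.map_integral_le continuous_exp.continuousOn isClosed_univ
      (Filter.Eventually.of_forall fun x => Set.mem_univ _) hllr.neg
      (by exact hint)
  have h1 : ∫ x, exp (-llr P Q x) ∂P ≤ 1 := by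
    rw [integral_congr_ae (exp_neg_llr hPQ)]
    calc ∫ x, (Q.rnDeriv P x).toReal ∂P
        = ∫ x in Set.univ, (Q.rnDeriv P x).toReal ∂P := by rw [setIntegral_univ]
      _ ≤ (Q Set.univ).toReal := Measure.setIntegral_toReal_rnDeriv_le (measure_ne_top Q _)
      _ = 1 := by simp
  have h2 : exp (∫ x, -llr P Q x ∂P) ≤ 1 := by
    refine le_trans ?_ h1
    simpa [Function.comp] using hJ
  have h3 := exp_le_one_iff.mp h2
  rw [integral_neg] at h3
  unfold klReal; linarith

lemma donsker_varadhan {Ω : Type*} [MeasurableSpace Ω] (P Q : Measure Ω)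
    [IsProbabilityMeasure P] [IsProbabilityMeasure Q]
    (hPQ : P ≪ Q) (f : Ω → ℝ) (hfP : Integrable f P)
    (hllr : Integrable (llr P Q) P) (hef : Integrable (fun x => exp (f x)) Q) :
    ∫ x, f x ∂P ≤ klReal P Q + log (∫ x, exp (f x) ∂Q) := by
  have : IsProbabilityMeasure (Q.tilted f) := isProbabilityMeasure_tilted hef
  have hPQ' : P ≪ Q.tilted f := hPQ.trans (absolutelyContinuous_tilted hef)
  have h0 : 0 ≤ klReal P (Q.tilted f) :=
    klReal_nonneg P _ hPQ' (integrable_llr_tilted_right hPQ hfP hllr hef)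
  have heq := integral_llr_tilted_right hPQ hfP hef hllr
  unfold klReal at *
  rw [heq] at h0
  linarith

lemma map_eval_pi' {ι : Type*} [Fintype ι] {Z : Type*} [MeasurableSpace Z]
    (μ : Measure Z) [IsProbabilityMeasure μ] (i : ι) :
    (Measure.pi fun _ : ι => μ).map (Function.eval i) = μ := by
  classical
  ext s hs
  rw [Measure.map_apply (measurable_pi_apply i) hs, Set.eval_preimage, Measure.pi_pi]
  rw [Finset.prod_eq_single i]
  · simp
  · intro j _ hj; simp [Function.update_of_ne hj]
  · simp


theorem subexponential_central_condition
    (μ : Measure Z) [IsProbabilityMeasure μ] (n : ℕ) (hn : 0 < n)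
    (P : Measure (W × (Fin n → Z))) [IsProbabilityMeasure P]
    (hmarg : P.map Prod.snd = Measure.pi fun _ : Fin n => μ)
    (ℓ : W × Z → ℝ) (hℓ : Measurable ℓ) (wstar : W)
    (hint : Integrable ℓ ((P.map Prod.fst).prod μ))
    (hinti : ∀ i : Fin n, Integrable ℓ (jointLaw P i))
    (hintw : Integrable (fun z => ℓ (wstar, z)) μ)
    (hac : ∀ i : Fin n, jointLaw P i ≪ (P.map Prod.fst).prod μ)
    (hIfin : ∀ i : Fin n, Integrable (llr (jointLaw P i) ((P.map Prod.fst).prod μ))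
      (jointLaw P i))
    (ν α : ℝ) (hν : 0 < ν) (hα : 0 < α)
    (hR : 0 < excessRisk μ P ℓ wstar)
    (hsubInt : ∀ lam : ℝ, |lam| < 1 / α →
      Integrable
        (fun p => Real.exp (lam * ((ℓ p - ℓ (wstar, p.2)) - excessRisk μ P ℓ wstar)))
        ((P.map Prod.fst).prod μ))
    (hsub : ∀ lam : ℝ, |lam| < 1 / α →
      Real.log (∫ p, Real.exp (lam * ((ℓ p - ℓ (wstar, p.2)) - excessRisk μ P ℓ wstar))
          ∂((P.map Prod.fst).prod μ)) ≤ lam ^ 2 * ν ^ 2 / 2) :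
    ∀ η : ℝ, 0 < η → η < 1 / α → η ≤ excessRisk μ P ℓ wstar / ν ^ 2 →
      Real.log (∫ p, Real.exp (-η * (ℓ p - ℓ (wstar, p.2))) ∂((P.map Prod.fst).prod μ)) ≤
          -(η / 2) * excessRisk μ P ℓ wstar ∧
      genErr μ n P ℓ ≤
        empExcess n P ℓ wstar + (2 / (η * (n : ℝ))) * ∑ i : Fin n, mutInfo μ P i := by
  intro η hη hηα hην
  have hn' : (0 : ℝ) < n := Nat.cast_pos.mpr hn
  set R : ℝ := excessRisk μ P ℓ wstar with hRdef
  set Q : Measure (W × Z) := (P.map Prod.fst).prod μ with hQdef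
  haveI : IsProbabilityMeasure (P.map Prod.fst) :=
    Measure.isProbabilityMeasure_map measurable_fst.aemeasurable
  haveI : IsProbabilityMeasure Q := by rw [hQdef]; infer_instance
  have hmi : ∀ i : Fin n, Measurable (fun p : W × (Fin n → Z) => (p.1, p.2 i)) :=
    fun i => measurable_fst.prodMk ((measurable_pi_apply i).comp measurable_snd)
  haveI : ∀ i : Fin n, IsProbabilityMeasure (jointLaw P i) := fun i =>
    Measure.isProbabilityMeasure_map (hmi i).aemeasurable
  -- Part 1: central condition
  have hlam : |(-η)| < 1 / α := by rwa [abs_neg, abs_of_pos hη]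
  have hint1 := hsubInt (-η) hlam
  have hsub1 := hsub (-η) hlam
  have hfun : (fun p : W × Z => exp (-η * (ℓ p - ℓ (wstar, p.2))))
      = fun p => exp (-η * R) * exp (-η * ((ℓ p - ℓ (wstar, p.2)) - R)) := by
    funext p; rw [← exp_add]; ring_nf
  have hsplit : ∫ p, exp (-η * (ℓ p - ℓ (wstar, p.2))) ∂Q
      = exp (-η * R) * ∫ p, exp (-η * ((ℓ p - ℓ (wstar, p.2)) - R)) ∂Q := by
    rw [hfun, integral_const_mul]
  have hpos1 : 0 < ∫ p, exp (-η * ((ℓ p - ℓ (wstar, p.2)) - R)) ∂Q :=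
    integral_exp_pos hint1
  have hcc : log (∫ p, exp (-η * (ℓ p - ℓ (wstar, p.2))) ∂Q) ≤ -(η / 2) * R := by
    rw [hsplit, log_mul (exp_pos _).ne' hpos1.ne', log_exp]
    have hbound : log (∫ p, exp (-η * ((ℓ p - ℓ (wstar, p.2)) - R)) ∂Q)
        ≤ η ^ 2 * ν ^ 2 / 2 := by simpa [neg_sq] using hsub1
    have hν2 : η * ν ^ 2 ≤ R := by
      rw [le_div_iff₀ (by positivity)] at hην; linarith
    nlinarith
  refine ⟨hcc, ?_⟩
  -- marginals
  have hzi : ∀ i : Fin n, P.map (fun p => p.2 i) = μ := by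
    intro i
    have h1 : (fun p : W × (Fin n → Z) => p.2 i) = Function.eval i ∘ Prod.snd := rfl
    rw [h1, ← Measure.map_map (measurable_pi_apply i) measurable_snd, hmarg, map_eval_pi']
  have hPisnd : ∀ i : Fin n, (jointLaw P i).map Prod.snd = μ := by
    intro i
    rw [jointLaw, Measure.map_map measurable_snd (hmi i)]
    exact hzi i
  have hQsnd : Q.map Prod.snd = μ := by
    rw [hQdef]
    have : ((P.map Prod.fst).prod μ).map Prod.snd = ((P.map Prod.fst).prod μ).snd := rfl
    rw [this, Measure.snd_prod]
  -- measurability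
  have hℓw : Measurable (fun z : Z => ℓ (wstar, z)) := hℓ.comp measurable_prodMk_left
  -- integrability of ℓ(w*, ·∘snd) against Q and jointLaw
  have hℓwQ : Integrable (fun p : W × Z => ℓ (wstar, p.2)) Q := by
    have h1 : Integrable (fun z => ℓ (wstar, z)) (Q.map Prod.snd) := by
      rw [hQsnd]; exact hintw
    exact (integrable_map_measure hℓw.aestronglyMeasurable measurable_snd.aemeasurable).mp h1
  have hℓwPi : ∀ i : Fin n, Integrable (fun p : W × Z => ℓ (wstar, p.2)) (jointLaw P i) := by
    intro i
    have h1 : Integrable (fun z => ℓ (wstar, z)) ((jointLaw P i).map Prod.snd) := by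
      rw [hPisnd i]; exact hintw
    exact (integrable_map_measure hℓw.aestronglyMeasurable measurable_snd.aemeasurable).mp h1
  have hrQ : Integrable (fun p : W × Z => ℓ p - ℓ (wstar, p.2)) Q := hint.sub hℓwQ
  have hrPi : ∀ i : Fin n, Integrable (fun p : W × Z => ℓ p - ℓ (wstar, p.2)) (jointLaw P i) :=
    fun i => (hinti i).sub (hℓwPi i)
  -- key quantities
  set A : ℝ := ∫ p, ℓ p ∂Q with hAdef
  set C : ℝ := ∫ z, ℓ (wstar, z) ∂μ with hCdef
  set B : Fin n → ℝ := fun i => ∫ p, ℓ p ∂(jointLaw P i) with hBdef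
  have hCQ : ∫ p, ℓ (wstar, p.2) ∂Q = C := by
    rw [hCdef, ← hQsnd, integral_map measurable_snd.aemeasurable hℓw.aestronglyMeasurable]
  have hCPi : ∀ i : Fin n, ∫ p, ℓ (wstar, p.2) ∂(jointLaw P i) = C := by
    intro i
    rw [hCdef, ← hPisnd i, integral_map measurable_snd.aemeasurable hℓw.aestronglyMeasurable]
  have hRval : R = A - C := by
    rw [hRdef, excessRisk, ← hQdef, integral_sub hint hℓwQ, hCQ]
  have hEi : ∀ i : Fin n, ∫ p, (ℓ p - ℓ (wstar, p.2)) ∂(jointLaw P i) = B i - C := by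
    intro i
    rw [integral_sub (hinti i) (hℓwPi i), hCPi i]
  -- Donsker-Varadhan per sample
  have hefQ : Integrable (fun p : W × Z => exp (-η * (ℓ p - ℓ (wstar, p.2)))) Q := by
    rw [hfun]; exact hint1.const_mul _
  have hkey : ∀ i : Fin n, R / 2 - (B i - C) ≤ mutInfo μ P i / η := by
    intro i
    have hfP : Integrable (fun p : W × Z => -η * (ℓ p - ℓ (wstar, p.2))) (jointLaw P i) :=
      (hrPi i).const_mul _
    have hdv := donsker_varadhan (jointLaw P i) Q (hac i) _ hfP (hIfin i) hefQ
    rw [integral_const_mul, hEi i] at hdv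
    have hmi' : mutInfo μ P i = klReal (jointLaw P i) Q := rfl
    rw [le_div_iff₀ hη, hmi']
    nlinarith [hdv, hcc]
  -- integral identities over P
  have hsmL : StronglyMeasurable (popRisk μ ℓ) := by
    apply StronglyMeasurable.integral_prod_right' (f := ℓ)
    exact hℓ.stronglyMeasurable
  have hpopInt : Integrable (fun p : W × (Fin n → Z) => popRisk μ ℓ p.1) P := by
    have h1 : Integrable (popRisk μ ℓ) (P.map Prod.fst) := by
      have := hint.integral_prod_left
      exact this
    exact (integrable_map_measure hsmL.aestronglyMeasurable measurable_fst.aemeasurable).mp h1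
  have htermInt : ∀ i : Fin n, Integrable (fun p : W × (Fin n → Z) => ℓ (p.1, p.2 i)) P := by
    intro i
    exact (integrable_map_measure hℓ.aestronglyMeasurable (hmi i).aemeasurable).mp (hinti i)
  have htermwInt : ∀ i : Fin n,
      Integrable (fun p : W × (Fin n → Z) => ℓ (wstar, p.2 i)) P := by
    intro i
    have h1 : Integrable (fun z => ℓ (wstar, z)) (P.map (fun p => p.2 i)) := by
      rw [hzi i]; exact hintw
    exact (integrable_map_measure hℓw.aestronglyMeasurable
      ((measurable_pi_apply i).comp measurable_snd).aemeasurable).mp h1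
  have hempInt : Integrable (fun p : W × (Fin n → Z) => empRisk n ℓ p.1 p.2) P := by
    unfold empRisk
    exact (integrable_finset_sum _ fun i _ => htermInt i).const_mul _
  have hempwInt : Integrable (fun p : W × (Fin n → Z) => empRisk n ℓ wstar p.2) P := by
    unfold empRisk
    exact (integrable_finset_sum _ fun i _ => htermwInt i).const_mul _
  have hpopVal : ∫ p, popRisk μ ℓ p.1 ∂P = A := by
    rw [hAdef, hQdef]
    rw [← integral_map measurable_fst.aemeasurable hsmL.aestronglyMeasurable]
    rw [show ∫ w, popRisk μ ℓ w ∂(P.map Prod.fst)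
        = ∫ w, ∫ z, ℓ (w, z) ∂μ ∂(P.map Prod.fst) from rfl]
    rw [integral_integral (by rw [← hQdef]; exact hint)]
  have hempVal : ∫ p, empRisk n ℓ p.1 p.2 ∂P = (1 / (n : ℝ)) * ∑ i, B i := by
    unfold empRisk
    rw [integral_const_mul, integral_finset_sum _ fun i _ => htermInt i]
    congr 1
    refine Finset.sum_congr rfl fun i _ => ?_
    simp only [hBdef]
    exact (integral_map (hmi i).aemeasurable hℓ.aestronglyMeasurable).symm
  have hempwVal : ∫ p, empRisk n ℓ wstar p.2 ∂P = C := by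
    unfold empRisk
    rw [integral_const_mul, integral_finset_sum _ fun i _ => htermwInt i]
    have : ∀ i : Fin n, ∫ p : W × (Fin n → Z), ℓ (wstar, p.2 i) ∂P = C := by
      intro i
      have hgm : Measurable (fun p : W × (Fin n → Z) => p.2 i) :=
        (measurable_pi_apply i).comp measurable_snd
      rw [hCdef, ← hzi i]
      exact (integral_map hgm.aemeasurable hℓw.aestronglyMeasurable).symm
    simp_rw [this]
    rw [Finset.sum_const, Finset.card_univ, Fintype.card_fin, nsmul_eq_mul]
    field_simp
  have hgenVal : genErr μ n P ℓ = A - (1 / (n : ℝ)) * ∑ i, B i := by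
    rw [genErr, integral_sub hpopInt hempInt, hpopVal, hempVal]
  have hexcVal : empExcess n P ℓ wstar = (1 / (n : ℝ)) * ∑ i, B i - C := by
    rw [empExcess, integral_sub hempInt hempwInt, hempVal, hempwVal]
  -- combine
  set S : ℝ := ∑ i, B i with hSdef
  set T : ℝ := ∑ i : Fin n, mutInfo μ P i with hTdef
  have hK : (n : ℝ) * (R / 2) - S + (n : ℝ) * C ≤ T / η := by
    have h1 : ∑ i : Fin n, (R / 2 - (B i - C)) ≤ ∑ i : Fin n, mutInfo μ P i / η :=
      Finset.sum_le_sum fun i _ => hkey i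
    rw [← Finset.sum_div] at h1
    have h2 : ∑ i : Fin n, (R / 2 - (B i - C)) = (n : ℝ) * (R / 2) - S + (n : ℝ) * C := by
      rw [Finset.sum_sub_distrib, Finset.sum_sub_distrib, Finset.sum_const, Finset.sum_const,
        Finset.card_univ, Fintype.card_fin, nsmul_eq_mul, nsmul_eq_mul, hSdef]
      ring
    rw [h2] at h1
    exact h1
  rw [hgenVal, hexcVal]
  have hK2 : (2 / (n : ℝ)) * ((n : ℝ) * (R / 2) - S + (n : ℝ) * C) ≤ (2 / (n : ℝ)) * (T / η) :=
    mul_le_mul_of_nonneg_left hK (by positivity)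
  have e1 : (2 / (n : ℝ)) * ((n : ℝ) * (R / 2) - S + (n : ℝ) * C)
      = R - 2 / (n : ℝ) * S + 2 * C := by field_simp
  have e2 : (2 / (n : ℝ)) * (T / η) = 2 / (η * (n : ℝ)) * T := by
    field_simp
  have e3 : 2 / (n : ℝ) * S = 1 / (n : ℝ) * S + 1 / (n : ℝ) * S := by ring
  rw [e1, e2] at hK2
  linarith [hRval ▸ hK2]
end

section
/- Let g : 𝒲 → ℝ be a measurable regularizer, let λ₀ ≥ 0 be a regularization coefficient, and suppose |g(w₁) − g(w₂)| ≤ B for all w₁, w₂ ∈ 𝒲 for some B > 0. Suppose the excess loss r satisfies the (η,c)-central condition under P_W ⊗ μ for some η > 0 and 0 < c ≤ 1, i.e. 0 < R and log ∫ exp(−η·r) d(P_W ⊗ μ) ≤ −c·η·R. Define the regularized empirical excess risk R̂_reg(w,s) := L̂(w,s) − L̂(w*,s) + (λ₀/n)·(g(w) − g(w*)). Then the expected excess risk satisfies R ≤ (1/c)·E_P[R̂_reg(W,S_n)] + λ₀B/(c·n) + (1/(c·η·n)) ∑_{i=1}^n I(W;Z_i). -/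
open MeasureTheory Real

lemma gibbs_nonneg {α : Type*} [MeasurableSpace α] (ρ ν : Measure α)
    [IsProbabilityMeasure ρ] [IsProbabilityMeasure ν] (h : ρ ≪ ν)
    (hi : Integrable (llr ρ ν) ρ) : 0 ≤ ∫ x, llr ρ ν x ∂ρ := by
  set φ : α → ℝ := fun x => ((ρ.rnDeriv ν x).toReal)⁻¹ with hφ
  have hφmeas : Measurable φ := (Measure.measurable_rnDeriv ρ ν).ennreal_toReal.inv
  have hφnn : 0 ≤ᵐ[ρ] φ := ae_of_all _ fun x => by positivity
  have hlint : ∫⁻ x, ENNReal.ofReal (φ x) ∂ρ ≤ 1 := by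
    rw [← lintegral_rnDeriv_mul h (hφmeas.ennreal_ofReal).aemeasurable]
    calc ∫⁻ x, ρ.rnDeriv ν x * ENNReal.ofReal (φ x) ∂ν
        ≤ ∫⁻ _, 1 ∂ν := by
          refine lintegral_mono_ae ?_
          filter_upwards [Measure.rnDeriv_lt_top ρ ν] with x hx
          rcases eq_or_ne (ρ.rnDeriv ν x) 0 with h0 | h0
          · simp [h0]
          · have htop : ρ.rnDeriv ν x ≠ ⊤ := hx.ne
            have hpos : 0 < (ρ.rnDeriv ν x).toReal := ENNReal.toReal_pos h0 htop
            rw [hφ]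
            simp only
            rw [ENNReal.ofReal_inv_of_pos hpos, ENNReal.ofReal_toReal htop]
            rw [ENNReal.mul_inv_cancel h0 htop]
      _ = 1 := by simp
  have hφint : Integrable φ ρ := by
    refine ⟨hφmeas.aestronglyMeasurable, ?_⟩
    rw [hasFiniteIntegral_iff_ofReal hφnn]
    exact lt_of_le_of_lt hlint ENNReal.one_lt_top
  have hφle : ∫ x, φ x ∂ρ ≤ 1 := by
    rw [integral_eq_lintegral_of_nonneg_ae hφnn hφmeas.aestronglyMeasurable]
    calc (∫⁻ x, ENNReal.ofReal (φ x) ∂ρ).toReal ≤ (1 : ENNReal).toReal :=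
      ENNReal.toReal_mono (by simp) hlint
    _ = 1 := by simp
  have hptwise : ∀ᵐ x ∂ρ, -llr ρ ν x ≤ φ x - 1 := by
    filter_upwards [Measure.rnDeriv_pos h, h.ae_le (Measure.rnDeriv_lt_top ρ ν)] with x hx hx'
    have hpos : 0 < (ρ.rnDeriv ν x).toReal := ENNReal.toReal_pos hx.ne' hx'.ne
    have : -llr ρ ν x = log (φ x) := by
      rw [llr, ← Real.log_inv]
    rw [this]
    exact Real.log_le_sub_one_of_pos (by positivity)
  have := integral_mono_ae hi.neg (hφint.sub (integrable_const 1)) hptwise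
  simp only [Pi.neg_apply, Pi.sub_apply] at this
  rw [integral_neg, integral_sub hφint (integrable_const 1)] at this
  simp only [integral_const, measure_univ, probReal_univ, ENNReal.toReal_one, smul_eq_mul, one_mul] at this
  linarith

lemma dv_ineq {α : Type*} [MeasurableSpace α] {ρ ν : Measure α}
    [IsProbabilityMeasure ρ] [IsProbabilityMeasure ν] (h : ρ ≪ ν) {f : α → ℝ}
    (hf : Integrable f ρ) (hexp : Integrable (fun x => exp (f x)) ν)
    (hllr : Integrable (llr ρ ν) ρ) :
    ∫ x, f x ∂ρ ≤ log (∫ x, exp (f x) ∂ν) + ∫ x, llr ρ ν x ∂ρ := by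
  haveI : IsProbabilityMeasure (ν.tilted f) := isProbabilityMeasure_tilted hexp
  have hac : ρ ≪ ν.tilted f := h.trans (absolutelyContinuous_tilted hexp)
  have h1 := integral_llr_tilted_right h hf hexp hllr
  have h2 : 0 ≤ ∫ x, llr ρ (ν.tilted f) x ∂ρ :=
    gibbs_nonneg _ _ hac (integrable_llr_tilted_right h hf hllr hexp)
  rw [h1] at h2
  linarith

lemma pi_map_eval {Z : Type*} [MeasurableSpace Z] (μ : Measure Z) [IsProbabilityMeasure μ]
    (n : ℕ) (i : Fin n) :
    (Measure.pi fun _ : Fin n => μ).map (fun s => s i) = μ := by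
  classical
  ext s hs
  rw [Measure.map_apply (measurable_pi_apply i) hs]
  have hpre : (fun f : Fin n → Z => f i) ⁻¹' s =
      Set.pi Set.univ (Function.update (fun _ => Set.univ) i s) := Set.eval_preimage
  rw [hpre, Measure.pi_pi, Finset.prod_eq_single i
    (fun j _ hj => by simp [Function.update_of_ne hj]) (by simp)]
  simp


variable {W Z : Type*} [MeasurableSpace W] [MeasurableSpace Z]

theorem regularized_ERM_bound
    (μ : Measure Z) [IsProbabilityMeasure μ] (n : ℕ) (hn : 0 < n)
    (P : Measure (W × (Fin n → Z))) [IsProbabilityMeasure P]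
    (hmarg : P.map Prod.snd = Measure.pi fun _ : Fin n => μ)
    (ℓ : W × Z → ℝ) (hℓ : Measurable ℓ) (wstar : W)
    (hint : Integrable ℓ ((P.map Prod.fst).prod μ))
    (hinti : ∀ i : Fin n, Integrable ℓ (jointLaw P i))
    (hintw : Integrable (fun z => ℓ (wstar, z)) μ)
    (hac : ∀ i : Fin n, jointLaw P i ≪ (P.map Prod.fst).prod μ)
    (hIfin : ∀ i : Fin n, Integrable (llr (jointLaw P i) ((P.map Prod.fst).prod μ))
      (jointLaw P i))
    (g : W → ℝ) (hg : Measurable g) (lam0 : ℝ) (hlam0 : 0 ≤ lam0)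
    (B : ℝ) (hB : 0 < B) (hgB : ∀ w₁ w₂ : W, |g w₁ - g w₂| ≤ B)
    (η c : ℝ) (hη : 0 < η) (hc : 0 < c) (hc1 : c ≤ 1)
    (hR : 0 < excessRisk μ P ℓ wstar)
    (hmgfInt : Integrable (fun p => Real.exp (-η * (ℓ p - ℓ (wstar, p.2))))
      ((P.map Prod.fst).prod μ))
    (hcentral :
      Real.log (∫ p, Real.exp (-η * (ℓ p - ℓ (wstar, p.2))) ∂((P.map Prod.fst).prod μ)) ≤
        -c * η * excessRisk μ P ℓ wstar) :
    excessRisk μ P ℓ wstar ≤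
      (1 / c) * (∫ p, (empRisk n ℓ p.1 p.2 - empRisk n ℓ wstar p.2 +
          (lam0 / (n : ℝ)) * (g p.1 - g wstar)) ∂P) +
        lam0 * B / (c * (n : ℝ)) +
        (1 / (c * η * (n : ℝ))) * ∑ i : Fin n, mutInfo μ P i := by

  classical
  have hn' : (0:ℝ) < n := Nat.cast_pos.mpr hn
  set Q := (P.map Prod.fst).prod μ with hQ
  haveI hPW : IsProbabilityMeasure (P.map Prod.fst) :=
    Measure.isProbabilityMeasure_map measurable_fst.aemeasurable
  haveI hQP : IsProbabilityMeasure Q := by rw [hQ]; infer_instance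
  have hm : ∀ i : Fin n, Measurable (fun p : W × (Fin n → Z) => (p.1, p.2 i)) :=
    fun i => measurable_fst.prodMk ((measurable_pi_apply i).comp measurable_snd)
  haveI hPi : ∀ i, IsProbabilityMeasure (jointLaw P i) := fun i =>
    Measure.isProbabilityMeasure_map (hm i).aemeasurable
  have hℓw : Measurable (fun z : Z => ℓ (wstar, z)) :=
    hℓ.comp (measurable_const.prodMk measurable_id)
  have hrmeas : Measurable (fun p : W × Z => ℓ p - ℓ (wstar, p.2)) :=
    hℓ.sub (hℓw.comp measurable_snd)
  have hsnd : ∀ i : Fin n, P.map (fun p => p.2 i) = μ := by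
    intro i
    have h0 : (fun p : W × (Fin n → Z) => p.2 i) = (fun s : Fin n → Z => s i) ∘ Prod.snd := rfl
    rw [h0, ← Measure.map_map (measurable_pi_apply i) measurable_snd, hmarg, pi_map_eval μ n i]
  have hint1 : ∀ i : Fin n, Integrable (fun p : W × (Fin n → Z) => ℓ (p.1, p.2 i)) P :=
    fun i => (integrable_map_measure hℓ.aestronglyMeasurable (hm i).aemeasurable).mp (hinti i)
  have hint2 : ∀ i : Fin n, Integrable (fun p : W × (Fin n → Z) => ℓ (wstar, p.2 i)) P := by
    intro i
    have h1 : Integrable (fun z => ℓ (wstar, z)) (P.map (fun p => p.2 i)) := by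
      rw [hsnd i]; exact hintw
    exact (integrable_map_measure hℓw.aestronglyMeasurable
      ((measurable_pi_apply i).comp measurable_snd).aemeasurable).mp h1
  have hsnd' : ∀ i : Fin n, (jointLaw P i).map Prod.snd = μ := by
    intro i
    rw [jointLaw, Measure.map_map measurable_snd (hm i)]
    exact hsnd i
  have hrint : ∀ i : Fin n,
      Integrable (fun p : W × Z => ℓ p - ℓ (wstar, p.2)) (jointLaw P i) := by
    intro i
    refine (hinti i).sub ?_
    have h1 : Integrable (fun z => ℓ (wstar, z)) ((jointLaw P i).map Prod.snd) := by
      rw [hsnd' i]; exact hintw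
    exact (integrable_map_measure hℓw.aestronglyMeasurable measurable_snd.aemeasurable).mp h1
  set R := excessRisk μ P ℓ wstar with hRdef
  -- Donsker-Varadhan per coordinate
  have hdv : ∀ i : Fin n, c * η * R ≤
      η * (∫ p, (ℓ (p.1, p.2 i) - ℓ (wstar, p.2 i)) ∂P) + mutInfo μ P i := by
    intro i
    have hfint : Integrable (fun p : W × Z => -η * (ℓ p - ℓ (wstar, p.2))) (jointLaw P i) :=
      (hrint i).const_mul _
    have h1 := dv_ineq (hac i) hfint hmgfInt (hIfin i)
    rw [integral_const_mul] at h1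
    have hmi : mutInfo μ P i = ∫ x, llr (jointLaw P i) Q x ∂(jointLaw P i) := rfl
    have hAi : (∫ p, (ℓ p - ℓ (wstar, p.2)) ∂(jointLaw P i)) =
        ∫ p, (ℓ (p.1, p.2 i) - ℓ (wstar, p.2 i)) ∂P := by
      rw [jointLaw, integral_map (hm i).aemeasurable hrmeas.aestronglyMeasurable]
    rw [hAi, ← hmi] at h1
    linarith [hcentral]
  -- empirical excess
  have hemp_eq : (fun p : W × (Fin n → Z) => empRisk n ℓ p.1 p.2 - empRisk n ℓ wstar p.2)
      = fun p => (1/(n:ℝ)) * ∑ i, (ℓ (p.1, p.2 i) - ℓ (wstar, p.2 i)) := by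
    funext p
    rw [empRisk, empRisk, ← mul_sub, Finset.sum_sub_distrib]
  have hsub : ∀ i : Fin n, Integrable
      (fun p : W × (Fin n → Z) => ℓ (p.1, p.2 i) - ℓ (wstar, p.2 i)) P :=
    fun i => (hint1 i).sub (hint2 i)
  have hempint : Integrable
      (fun p : W × (Fin n → Z) => empRisk n ℓ p.1 p.2 - empRisk n ℓ wstar p.2) P := by
    rw [hemp_eq]
    exact (integrable_finset_sum _ fun i _ => hsub i).const_mul _
  have hE : (∫ p, (empRisk n ℓ p.1 p.2 - empRisk n ℓ wstar p.2) ∂P)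
      = (1/(n:ℝ)) * ∑ i, ∫ p, (ℓ (p.1, p.2 i) - ℓ (wstar, p.2 i)) ∂P := by
    simp only [hemp_eq]
    rw [integral_const_mul, integral_finset_sum _ fun i _ => hsub i]
  set E := ∫ p, (empRisk n ℓ p.1 p.2 - empRisk n ℓ wstar p.2) ∂P with hEdef
  -- regularizer
  have hgmeas : Measurable fun p : W × (Fin n → Z) => g p.1 - g wstar :=
    (hg.comp measurable_fst).sub measurable_const
  have hgint : Integrable (fun p : W × (Fin n → Z) => g p.1 - g wstar) P :=
    (integrable_const B).mono' hgmeas.aestronglyMeasurable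
      (ae_of_all _ fun p => by rw [Real.norm_eq_abs]; exact hgB p.1 wstar)
  have hG : -B ≤ ∫ p, (g p.1 - g wstar) ∂P := by
    have := integral_mono_ae (integrable_const (-B)) hgint
      (ae_of_all _ fun p => (abs_le.mp (hgB p.1 wstar)).1)
    simpa using this
  have hEreg : (∫ p, (empRisk n ℓ p.1 p.2 - empRisk n ℓ wstar p.2 +
        (lam0 / (n : ℝ)) * (g p.1 - g wstar)) ∂P)
      = E + (lam0/(n:ℝ)) * ∫ p, (g p.1 - g wstar) ∂P := by
    rw [integral_add hempint (hgint.const_mul _), integral_const_mul, hEdef]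
  set Ereg := ∫ p, (empRisk n ℓ p.1 p.2 - empRisk n ℓ wstar p.2 +
      (lam0 / (n : ℝ)) * (g p.1 - g wstar)) ∂P with hEregdef
  have hEle : E ≤ Ereg + lam0 * B / n := by
    have h1 : (lam0/(n:ℝ)) * (-B) ≤ (lam0/(n:ℝ)) * ∫ p, (g p.1 - g wstar) ∂P :=
      mul_le_mul_of_nonneg_left hG (by positivity)
    have h2 : (lam0/(n:ℝ)) * (-B) = -(lam0 * B / n) := by ring
    rw [hEreg]
    linarith
  -- sum over coordinates
  set S := ∑ i : Fin n, mutInfo μ P i with hSdef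
  have h2 : (∑ i : Fin n, ∫ p, (ℓ (p.1, p.2 i) - ℓ (wstar, p.2 i)) ∂P) = (n:ℝ) * E := by
    rw [hE]
    field_simp
  have hsum : (n:ℝ) * (c * η * R) ≤ η * ((n:ℝ) * E) + S := by
    calc (n:ℝ) * (c * η * R) = ∑ _i : Fin n, c * η * R := by
          rw [Finset.sum_const, Finset.card_univ, Fintype.card_fin, nsmul_eq_mul]
      _ ≤ ∑ i : Fin n, (η * (∫ p, (ℓ (p.1, p.2 i) - ℓ (wstar, p.2 i)) ∂P) + mutInfo μ P i) :=
          Finset.sum_le_sum fun i _ => hdv i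
      _ = η * (∑ i : Fin n, ∫ p, (ℓ (p.1, p.2 i) - ℓ (wstar, p.2 i)) ∂P) + S := by
          rw [Finset.sum_add_distrib, Finset.mul_sum]
      _ = η * ((n:ℝ) * E) + S := by rw [h2]
  -- conclude
  have hpos : 0 < c * η * (n:ℝ) := by positivity
  have hfin : R ≤ (1/c) * (Ereg + lam0 * B / n) + (1/(c*η*(n:ℝ))) * S := by
    rw [← mul_le_mul_iff_right₀ hpos]
    have hx : c * η * (n:ℝ) * ((1/c) * (Ereg + lam0 * B / n) + (1/(c*η*(n:ℝ))) * S)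
        = η * ((n:ℝ) * (Ereg + lam0 * B / n)) + S := by
      field_simp
    rw [hx]
    have h3 : η * ((n:ℝ) * E) ≤ η * ((n:ℝ) * (Ereg + lam0 * B / n)) :=
      mul_le_mul_of_nonneg_left (mul_le_mul_of_nonneg_left hEle (le_of_lt hn')) (le_of_lt hη)
    nlinarith [hsum]
  have hsplit : (1/c) * (Ereg + lam0 * B / n) = (1/c) * Ereg + lam0 * B / (c * (n:ℝ)) := by
    field_simp
  linarith [hfin, hsplit.le, hsplit.ge]
end
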